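/- For any positive integers b, c, the sequence of rational functions (x_m) in Q(x_1,x_2) defined by the exchange relations x_{m+1}x_{m-1} = x_m^b + 1 for m odd and x_{m+1}x_{m-1} = x_m^c + 1 for m even (with x_1, x_2 the generators) satisfies: every x_m is a Laurent polynomial in x_1 and x_2 with integer coefficients. -/

import Mathlib

open MvPolynomial

set_option maxHeartbeats 1000000
set_option synthInstance.maxHeartbeats 400000

noncomputable section LaurentAux

abbrev LKK : Type := FractionRing (MvPolynomial (Fin 2) ℚ)
abbrev LAA : Type := MvPolynomial (Fin 2) ℤ

def Lgg : LAA →+* LKK :=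
  (algebraMap (MvPolynomial (Fin 2) ℚ) LKK).comp (MvPolynomial.map (Int.castRingHom ℚ))

def LSS : Submonoid LAA := Submonoid.closure {X 0, X 1}

abbrev LRR := Localization LSS

lemma Lgg_inj : Function.Injective Lgg :=
  (IsFractionRing.injective (MvPolynomial (Fin 2) ℚ) LKK).comp
    (MvPolynomial.map_injective _ Int.cast_injective)

lemma Lgg_X (i : Fin 2) : Lgg (X i) = algebraMap (MvPolynomial (Fin 2) ℚ) LKK (X i) := by
  simp [Lgg]

lemma Lgg_ne_zero {a : LAA} (h : a ≠ 0) : Lgg a ≠ 0 := by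
  intro h0
  exact h (Lgg_inj (by simpa using h0))

lemma LSS_units : ∀ s : LSS, IsUnit (Lgg s) := by
  rintro ⟨s, hs⟩
  induction hs using Submonoid.closure_induction with
  | mem a ha =>
    rcases ha with h | h <;> subst h <;>
      exact isUnit_iff_ne_zero.mpr (Lgg_ne_zero (MvPolynomial.X_ne_zero _))
  | one => simp
  | mul a b _ _ ha hb => rw [map_mul]; exact ha.mul hb

def Lff : LRR →+* LKK := IsLocalization.lift LSS_units

def Lev : LAA →+* ℚ := MvPolynomial.eval₂Hom (Int.castRingHom ℚ) (fun _ => 1)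

lemma Lev_units : ∀ s : LSS, IsUnit (Lev s) := by
  rintro ⟨s, hs⟩
  induction hs using Submonoid.closure_induction with
  | mem a ha => rcases ha with h | h <;> subst h <;> simp [Lev]
  | one => simp
  | mul a b _ _ ha hb => rw [map_mul]; exact ha.mul hb

def Lpsi : LRR →+* ℚ := IsLocalization.lift Lev_units

lemma Lff_algebraMap (a : LAA) : Lff (algebraMap LAA LRR a) = Lgg a :=
  IsLocalization.lift_eq _ _

lemma Lpsi_algebraMap (a : LAA) : Lpsi (algebraMap LAA LRR a) = Lev a :=
  IsLocalization.lift_eq _ _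

lemma Lff_inj : Function.Injective Lff := by
  rw [injective_iff_map_eq_zero]
  intro r hr
  obtain ⟨⟨a, s⟩, rfl⟩ := IsLocalization.mk'_surjective LSS r
  have h := (IsLocalization.lift_mk'_spec (g := Lgg) LSS_units a 0 s).mp hr
  rw [mul_zero] at h
  have : a = 0 := Lgg_inj (by simpa using h)
  rw [this]
  exact IsLocalization.mk'_zero s

/-- The invariant: `y` is the image of a Laurent element whose evaluation at (1,1) is positive. -/
def LQ (y : LKK) : Prop := ∃ r : LRR, y = Lff r ∧ 0 < Lpsi r

lemma LQ_ne_zero {y : LKK} (h : LQ y) : y ≠ 0 := by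
  obtain ⟨r, rfl, hp⟩ := h
  intro h0
  have : r = 0 := Lff_inj (by simpa using h0)
  rw [this, map_zero] at hp
  exact lt_irrefl 0 hp

lemma LQ_one : LQ 1 := ⟨1, by simp, by simp⟩

lemma LQ_add {y z : LKK} (hy : LQ y) (hz : LQ z) : LQ (y + z) := by
  obtain ⟨r, rfl, hr⟩ := hy
  obtain ⟨s, rfl, hs⟩ := hz
  exact ⟨r + s, by rw [map_add], by rw [map_add]; positivity⟩

lemma LQ_mul {y z : LKK} (hy : LQ y) (hz : LQ z) : LQ (y * z) := by
  obtain ⟨r, rfl, hr⟩ := hy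
  obtain ⟨s, rfl, hs⟩ := hz
  exact ⟨r * s, by rw [map_mul], by rw [map_mul]; positivity⟩

lemma LQ_pow {y : LKK} (hy : LQ y) (e : ℕ) : LQ (y ^ e) := by
  obtain ⟨r, rfl, hr⟩ := hy
  exact ⟨r ^ e, by rw [map_pow], by rw [map_pow]; positivity⟩

lemma LQ_X (i : Fin 2) : LQ (algebraMap (MvPolynomial (Fin 2) ℚ) LKK (X i)) := by
  refine ⟨algebraMap LAA LRR (X i), by rw [Lff_algebraMap, Lgg_X], ?_⟩
  rw [Lpsi_algebraMap]
  simp [Lev]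

lemma LQ_X_inv (i : Fin 2) : LQ ((algebraMap (MvPolynomial (Fin 2) ℚ) LKK (X i))⁻¹) := by
  have hX : (X i : LAA) ∈ LSS := Submonoid.subset_closure (by fin_cases i <;> simp)
  have hu : IsUnit (algebraMap LAA LRR (X i)) := IsLocalization.map_units LRR ⟨X i, hX⟩
  have hmul : (↑hu.unit⁻¹ : LRR) * algebraMap LAA LRR (X i) = 1 := by
    exact hu.val_inv_mul
  refine ⟨↑hu.unit⁻¹, ?_, ?_⟩
  · have h1 : Lff ↑hu.unit⁻¹ * Lff (algebraMap LAA LRR (X i)) = 1 := by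
      rw [← map_mul, hmul, map_one]
    have := inv_eq_of_mul_eq_one_left h1
    rw [Lff_algebraMap, Lgg_X] at this
    exact this
  · have h1 : Lpsi ↑hu.unit⁻¹ * Lpsi (algebraMap LAA LRR (X i)) = 1 := by
      rw [← map_mul, hmul, map_one]
    rw [Lpsi_algebraMap] at h1
    have h2 : Lev (X i : LAA) = 1 := by simp [Lev]
    rw [h2, mul_one] at h1
    rw [h1]
    norm_num

end LaurentAux

/-- Pure commutative-ring identity underlying the Laurent phenomenon step. -/
lemma Lkey_identity {Rc : Type*} [CommRing Rc] (y1 y2 y3 y4 : Rc) (e e' : ℕ) (he' : 0 < e')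
    (h2 : y1 * y3 = y2 ^ e' + 1) (h3 : y2 * y4 = y3 ^ e + 1) :
    (y1 ^ e * y4 - y2 ^ (e' - 1) * ∑ i ∈ Finset.range e, (y1 * y3) ^ i) * y2 = y1 ^ e + 1 := by
  have hpow : y2 ^ (e' - 1) * y2 = y2 ^ e' := by
    rw [← pow_succ]
    congr 1
    omega
  have hgeom : (∑ i ∈ Finset.range e, (y1 * y3) ^ i) * (y1 * y3 - 1) = (y1 * y3) ^ e - 1 :=
    geom_sum_mul _ _
  have h2' : y2 ^ e' = y1 * y3 - 1 := by rw [h2]; ring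
  calc (y1 ^ e * y4 - y2 ^ (e' - 1) * ∑ i ∈ Finset.range e, (y1 * y3) ^ i) * y2
      = y1 ^ e * (y2 * y4) -
        (y2 ^ (e' - 1) * y2) * ∑ i ∈ Finset.range e, (y1 * y3) ^ i := by ring
    _ = y1 ^ e * (y3 ^ e + 1) -
        (y1 * y3 - 1) * ∑ i ∈ Finset.range e, (y1 * y3) ^ i := by rw [h3, hpow, h2']
    _ = y1 ^ e * (y3 ^ e + 1) - ((y1 * y3) ^ e - 1) := by
        rw [← hgeom]; ring
    _ = y1 ^ e + 1 := by rw [mul_pow]; ring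

/-- The key step: given three consecutive exchange relations, the invariant propagates. -/
lemma Lkey {y0 y1 y2 y3 y4 : LKK} {e e' : ℕ} (he' : 0 < e')
    (h1 : y0 * y2 = y1 ^ e + 1) (h2 : y1 * y3 = y2 ^ e' + 1) (h3 : y2 * y4 = y3 ^ e + 1)
    (Q1 : LQ y1) (Q2 : LQ y2) (Q3 : LQ y3) (Q4 : LQ y4) : LQ y0 := by
  have hy2 : y2 ≠ 0 := LQ_ne_zero Q2
  obtain ⟨r1, hy1e, p1⟩ := Q1
  obtain ⟨r2, hy2e, p2⟩ := Q2
  obtain ⟨r3, hy3e, p3⟩ := Q3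
  obtain ⟨r4, hy4e, p4⟩ := Q4
  -- lift the relations h2, h3 to LRR via injectivity of Lff
  have h2R : r1 * r3 = r2 ^ e' + 1 := by
    apply Lff_inj
    rw [map_mul, map_add, map_pow, map_one, ← hy1e, ← hy2e, ← hy3e]
    exact h2
  have h3R : r2 * r4 = r3 ^ e + 1 := by
    apply Lff_inj
    rw [map_mul, map_add, map_pow, map_one, ← hy2e, ← hy3e, ← hy4e]
    exact h3
  set r0 : LRR := r1 ^ e * r4 - r2 ^ (e' - 1) * ∑ i ∈ Finset.range e, (r1 * r3) ^ i with hr0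
  have hid : r0 * r2 = r1 ^ e + 1 := Lkey_identity r1 r2 r3 r4 e e' he' h2R h3R
  -- transfer to LKK
  have hidK : Lff r0 * y2 = y1 ^ e + 1 := by
    have := congrArg Lff hid
    rw [map_mul, map_add, map_pow, map_one] at this
    rw [← hy1e, ← hy2e] at this
    exact this
  have hy0 : y0 = Lff r0 := by
    apply mul_right_cancel₀ hy2
    rw [h1, hidK]
  -- positivity
  have hpsi : Lpsi r0 * Lpsi r2 = Lpsi r1 ^ e + 1 := by
    have := congrArg Lpsi hid
    rw [map_mul, map_add, map_pow, map_one] at this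
    exact this
  have hp0 : 0 < Lpsi r0 := by
    nlinarith [pow_pos p1 e]
  exact ⟨r0, hy0, hp0⟩

/-- The easy step: dividing by a unit. -/
lemma Leasy {y0 y1 u : LKK} (e : ℕ) (h : y0 * u = y1 ^ e + 1)
    (h1 : LQ y1) (hu : LQ u) (hui : LQ u⁻¹) : LQ y0 := by
  have hu0 : u ≠ 0 := LQ_ne_zero hu
  have : y0 = (y1 ^ e + 1) * u⁻¹ := (eq_mul_inv_iff_mul_eq₀ hu0).mpr h
  rw [this]
  exact LQ_mul (LQ_add (LQ_pow h1 e) LQ_one) hui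

/-- Everything in the image of `Lff` is an integral Laurent polynomial in the images of the
variables. -/
lemma Lff_mem_closure (r : LRR) :
    Lff r ∈ Subring.closure ({algebraMap (MvPolynomial (Fin 2) ℚ) LKK (X 0),
      algebraMap (MvPolynomial (Fin 2) ℚ) LKK (X 1),
      (algebraMap (MvPolynomial (Fin 2) ℚ) LKK (X 0))⁻¹,
      (algebraMap (MvPolynomial (Fin 2) ℚ) LKK (X 1))⁻¹} : Set LKK) := by
  set T := Subring.closure ({algebraMap (MvPolynomial (Fin 2) ℚ) LKK (X 0),
      algebraMap (MvPolynomial (Fin 2) ℚ) LKK (X 1),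
      (algebraMap (MvPolynomial (Fin 2) ℚ) LKK (X 0))⁻¹,
      (algebraMap (MvPolynomial (Fin 2) ℚ) LKK (X 1))⁻¹} : Set LKK) with hT
  have hXmem : ∀ i : Fin 2, algebraMap (MvPolynomial (Fin 2) ℚ) LKK (X i) ∈ T := by
    intro i
    fin_cases i
    · exact Subring.subset_closure (by simp)
    · exact Subring.subset_closure (by simp)
  have hXinvmem : ∀ i : Fin 2, (algebraMap (MvPolynomial (Fin 2) ℚ) LKK (X i))⁻¹ ∈ T := by
    intro i
    fin_cases i
    · exact Subring.subset_closure (by simp)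
    · exact Subring.subset_closure (by simp)
  have hpoly : ∀ a : LAA, Lgg a ∈ T := by
    intro a
    induction a using MvPolynomial.induction_on with
    | C n =>
      have : (C n : LAA) = (n : LAA) := by simp
      rw [this, map_intCast]
      exact intCast_mem T n
    | add p q hp hq => rw [map_add]; exact add_mem hp hq
    | mul_X p i hp =>
      rw [map_mul, Lgg_X]
      exact mul_mem hp (hXmem i)
  have hSinv : ∀ s ∈ LSS, (Lgg s)⁻¹ ∈ T := by
    intro s hs
    induction hs using Submonoid.closure_induction with
    | mem a ha =>
      rcases ha with h | h <;> subst h <;> rw [Lgg_X] <;> exact hXinvmem _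
    | one => rw [map_one, inv_one]; exact one_mem T
    | mul a b _ _ ha hb => rw [map_mul, mul_inv]; exact mul_mem ha hb
  obtain ⟨⟨a, s⟩, rfl⟩ := IsLocalization.mk'_surjective LSS r
  have hspec : Lff (IsLocalization.mk' LRR a s) = Lgg a * (Lgg s)⁻¹ := by
    refine (IsLocalization.lift_mk'_spec LSS_units a _ s).mpr ?_
    have hs0 : Lgg (s : LAA) ≠ 0 := (LSS_units s).ne_zero
    field_simp
  rw [hspec]
  exact mul_mem (hpoly a) (hSinv s s.2)

theorem laurent_phenomenon_rank2
    (b c : ℕ) (hb : 0 < b) (hc : 0 < c)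
    (x : ℤ → FractionRing (MvPolynomial (Fin 2) ℚ))
    (hx1 : x 1 = algebraMap (MvPolynomial (Fin 2) ℚ) _ (MvPolynomial.X 0))
    (hx2 : x 2 = algebraMap (MvPolynomial (Fin 2) ℚ) _ (MvPolynomial.X 1))
    (hrec : ∀ m : ℤ, x (m + 1) * x (m - 1) =
      if Odd m then x m ^ b + 1 else x m ^ c + 1) :
    ∀ m : ℤ, x m ∈ Subring.closure ({x 1, x 2, (x 1)⁻¹, (x 2)⁻¹} :
      Set (FractionRing (MvPolynomial (Fin 2) ℚ))) := by
  have rel : ∀ t : ℤ, Odd t → x (t + 1) * x (t - 1) = x t ^ b + 1 := by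
    intro t ht; rw [hrec t, if_pos ht]
  have rel' : ∀ t : ℤ, ¬ Odd t → x (t + 1) * x (t - 1) = x t ^ c + 1 := by
    intro t ht; rw [hrec t, if_neg ht]
  -- base cases
  have B1 : LQ (x 1) := by rw [hx1]; exact LQ_X 0
  have B2 : LQ (x 2) := by rw [hx2]; exact LQ_X 1
  have B1i : LQ ((x 1)⁻¹) := by rw [hx1]; exact LQ_X_inv 0
  have B2i : LQ ((x 2)⁻¹) := by rw [hx2]; exact LQ_X_inv 1
  have B3 : LQ (x 3) := by
    have h := rel' 2 (by rw [Int.odd_iff]; omega)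
    norm_num at h
    exact Leasy c h B2 B1 B1i
  have B4 : LQ (x 4) := by
    have h := rel 3 (by rw [Int.odd_iff]; omega)
    norm_num at h
    exact Leasy b h B3 B2 B2i
  have B0 : LQ (x 0) := by
    have h := rel 1 (by rw [Int.odd_iff]; omega)
    norm_num at h
    rw [mul_comm] at h
    exact Leasy b h B1 B2 B2i
  -- upward step
  have stepU : ∀ n : ℤ, LQ (x (n - 4)) → LQ (x (n - 3)) → LQ (x (n - 2)) → LQ (x (n - 1)) →
      LQ (x n) := by
    intro n q4 q3 q2 q1
    rcases Int.even_or_odd (n - 1) with he | ho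
    · -- n-1 even : relation at n-1 has exponent c, at n-2 exponent b, at n-3 exponent c
      rw [Int.even_iff] at he
      have h1 := rel' (n - 1) (by rw [Int.odd_iff]; omega)
      have h2 := rel (n - 2) (by rw [Int.odd_iff]; omega)
      have h3 := rel' (n - 3) (by rw [Int.odd_iff]; omega)
      rw [show n - 1 + 1 = n by ring, show n - 1 - 1 = n - 2 by ring] at h1
      rw [show n - 2 + 1 = n - 1 by ring, show n - 2 - 1 = n - 3 by ring] at h2
      rw [show n - 3 + 1 = n - 2 by ring, show n - 3 - 1 = n - 4 by ring] at h3
      exact Lkey hb h1 h2 h3 q1 q2 q3 q4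
    · rw [Int.odd_iff] at ho
      have h1 := rel (n - 1) (by rw [Int.odd_iff]; omega)
      have h2 := rel' (n - 2) (by rw [Int.odd_iff]; omega)
      have h3 := rel (n - 3) (by rw [Int.odd_iff]; omega)
      rw [show n - 1 + 1 = n by ring, show n - 1 - 1 = n - 2 by ring] at h1
      rw [show n - 2 + 1 = n - 1 by ring, show n - 2 - 1 = n - 3 by ring] at h2
      rw [show n - 3 + 1 = n - 2 by ring, show n - 3 - 1 = n - 4 by ring] at h3
      exact Lkey hc h1 h2 h3 q1 q2 q3 q4
  -- downward step
  have stepD : ∀ n : ℤ, LQ (x (n + 1)) → LQ (x (n + 2)) → LQ (x (n + 3)) → LQ (x (n + 4)) →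
      LQ (x n) := by
    intro n q1 q2 q3 q4
    rcases Int.even_or_odd (n + 1) with he | ho
    · rw [Int.even_iff] at he
      have h1 := rel' (n + 1) (by rw [Int.odd_iff]; omega)
      have h2 := rel (n + 2) (by rw [Int.odd_iff]; omega)
      have h3 := rel' (n + 3) (by rw [Int.odd_iff]; omega)
      rw [show n + 1 + 1 = n + 2 by ring, show n + 1 - 1 = n by ring, mul_comm] at h1
      rw [show n + 2 + 1 = n + 3 by ring, show n + 2 - 1 = n + 1 by ring, mul_comm] at h2
      rw [show n + 3 + 1 = n + 4 by ring, show n + 3 - 1 = n + 2 by ring, mul_comm] at h3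
      exact Lkey hb h1 h2 h3 q1 q2 q3 q4
    · rw [Int.odd_iff] at ho
      have h1 := rel (n + 1) (by rw [Int.odd_iff]; omega)
      have h2 := rel' (n + 2) (by rw [Int.odd_iff]; omega)
      have h3 := rel (n + 3) (by rw [Int.odd_iff]; omega)
      rw [show n + 1 + 1 = n + 2 by ring, show n + 1 - 1 = n by ring, mul_comm] at h1
      rw [show n + 2 + 1 = n + 3 by ring, show n + 2 - 1 = n + 1 by ring, mul_comm] at h2
      rw [show n + 3 + 1 = n + 4 by ring, show n + 3 - 1 = n + 2 by ring, mul_comm] at h3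
      exact Lkey hc h1 h2 h3 q1 q2 q3 q4
  -- expanding-window induction
  have main : ∀ k : ℕ, ∀ j : ℤ, -(k : ℤ) ≤ j → j ≤ (k : ℤ) + 4 → LQ (x j) := by
    intro k
    induction k with
    | zero =>
      intro j h1 h2
      norm_num at h1 h2
      interval_cases j
      · exact B0
      · exact B1
      · exact B2
      · exact B3
      · exact B4
    | succ k ih =>
      intro j h1 h2
      by_cases hlo : -(k : ℤ) ≤ j
      · by_cases hhi : j ≤ (k : ℤ) + 4
        · exact ih j hlo hhi
        · have hj : j = (k : ℤ) + 5 := by push_cast at h2 ⊢; omega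
          subst hj
          apply stepU ((k : ℤ) + 5)
          · rw [show (k : ℤ) + 5 - 4 = (k : ℤ) + 1 by ring]
            exact ih _ (by omega) (by omega)
          · rw [show (k : ℤ) + 5 - 3 = (k : ℤ) + 2 by ring]
            exact ih _ (by omega) (by omega)
          · rw [show (k : ℤ) + 5 - 2 = (k : ℤ) + 3 by ring]
            exact ih _ (by omega) (by omega)
          · rw [show (k : ℤ) + 5 - 1 = (k : ℤ) + 4 by ring]
            exact ih _ (by omega) (by omega)
      · have hj : j = -((k : ℤ) + 1) := by push_cast at h1 ⊢; omega
        subst hj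
        apply stepD (-((k : ℤ) + 1))
        · rw [show -((k : ℤ) + 1) + 1 = -(k : ℤ) by ring]
          exact ih _ (by omega) (by omega)
        · rw [show -((k : ℤ) + 1) + 2 = -(k : ℤ) + 1 by ring]
          exact ih _ (by omega) (by omega)
        · rw [show -((k : ℤ) + 1) + 3 = -(k : ℤ) + 2 by ring]
          exact ih _ (by omega) (by omega)
        · rw [show -((k : ℤ) + 1) + 4 = -(k : ℤ) + 3 by ring]
          exact ih _ (by omega) (by omega)
  intro m
  have hQ : LQ (x m) := by
    refine main (m.natAbs + 4) m ?_ ?_ <;> omega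
  obtain ⟨r, hr, -⟩ := hQ
  rw [hr, hx1, hx2]
  exact Lff_mem_closure r
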